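/- Combined honest-Alice characterization: Alice is honest in the 3-step packetized payment game if and only if αₐ > (P₀ + 2δ)/4 and μᵦ > P₀/(4αₐ + P₀); i.e., the conjunction of the final-step inequality (for all P₂ ∈ {P₀−2δ, P₀, P₀+2δ}: αₐ + P₀ − P₂ > −αₐ + P₀ − P₂/2) and the initial-step inequality (μᵦ·αₐ + (1−μᵦ)·(−αₐ − P₀/2) > −αₐ) is equivalent to the stated pair of conditions. -/
import Mathlib


/-- Combined honest-Alice characterization: the conjunction of the final-step
inequalities and the initial-step inequality is equivalent to
`αa > (P₀ + 2δ)/4` and `μb > P₀/(4αa + P₀)`. -/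
theorem honest_alice_characterization (P₀ δ αa μb : ℝ)
    (hP₀ : 0 < P₀) (hδ : 0 ≤ δ) (hαa : 0 < αa) (hμ0 : 0 ≤ μb) (hμ1 : μb ≤ 1) :
    ((∀ P₂ : ℝ, (P₂ = P₀ - 2 * δ ∨ P₂ = P₀ ∨ P₂ = P₀ + 2 * δ) →
        αa + P₀ - P₂ > -αa + P₀ - P₂ / 2) ∧
      μb * αa + (1 - μb) * (-αa - P₀ / 2) > -αa)
    ↔ (αa > (P₀ + 2 * δ) / 4 ∧ μb > P₀ / (4 * αa + P₀)) := by
  have hpos : 0 < 4 * αa + P₀ := by linarith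
  constructor
  · rintro ⟨h1, h2⟩
    have := h1 (P₀ + 2 * δ) (Or.inr (Or.inr rfl))
    refine ⟨by linarith, ?_⟩
    rw [gt_iff_lt, div_lt_iff₀ hpos]
    nlinarith
  · rintro ⟨h1, h2⟩
    rw [gt_iff_lt, div_lt_iff₀ hpos] at h2
    refine ⟨?_, by nlinarith⟩
    rintro P₂ (rfl | rfl | rfl) <;> linarith
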